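/- Concentration Lemma: Let λ be a slope with |λ(m+n) - λ(m) - λ(n)| ≤ s for all m, n ∈ ℤ, where s ≥ 1. Define λ′(n) := λ(3sn) : 3s (optimal euclidean division by 3s). Then |λ′(m+n) - λ′(m) - λ′(n)| ≤ 1 for all m, n ∈ ℤ, and |λ′(n) - λ(n)| ≤ s for all n ∈ ℤ (so λ′ is a well adjusted slope equivalent to λ). -/

import Mathlib

/-- `r` is the result of optimal euclidean division of `p` by `q > 0`:
the unique integer with `2p - q ≤ 2qr < 2p + q`. -/
def OptDiv (p q r : ℤ) : Prop :=
  2 * p - q ≤ 2 * q * r ∧ 2 * q * r < 2 * p + q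

lemma mul_slope (l : ℤ → ℤ) (s : ℤ)
    (hdef : ∀ m n : ℤ, |l (m + n) - l m - l n| ≤ s) (n : ℤ) :
    ∀ k : ℤ, 1 ≤ k → |l (k * n) - k * l n| ≤ (k - 1) * s := by
  intro k hk
  refine Int.le_induction (motive := fun k _ => |l (k * n) - k * l n| ≤ (k - 1) * s) ?_ ?_ k hk
  · norm_num
  · intro k hk ih
    have h2 := hdef (k * n) n
    have hkn : (k + 1) * n = k * n + n := by ring
    rw [hkn]
    rw [abs_le] at ih h2 ⊢
    constructor <;> nlinarith [ih.1, ih.2, h2.1, h2.2]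

/-- Concentration Lemma: if the defect of the slope `λ` is bounded by `s ≥ 1`
and `λ' n` is the optimal euclidean division of `λ (3sn)` by `3s`, then `λ'`
has defect bounded by `1` and `|λ' n - λ n| ≤ s` for all `n`. -/
theorem concentration (l l' : ℤ → ℤ) (s : ℤ) (hs : 1 ≤ s)
    (hdef : ∀ m n : ℤ, |l (m + n) - l m - l n| ≤ s)
    (hl' : ∀ n : ℤ, OptDiv (l (3 * s * n)) (3 * s) (l' n)) :
    (∀ m n : ℤ, |l' (m + n) - l' m - l' n| ≤ 1) ∧
      ∀ n : ℤ, |l' n - l n| ≤ s := by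
  constructor
  · intro m n
    obtain ⟨a1, a2⟩ := hl' (m + n)
    obtain ⟨b1, b2⟩ := hl' m
    obtain ⟨c1, c2⟩ := hl' n
    have hd := hdef (3 * s * m) (3 * s * n)
    have heq : 3 * s * m + 3 * s * n = 3 * s * (m + n) := by ring
    rw [heq, abs_le] at hd
    rw [abs_le]
    constructor <;> nlinarith [hd.1, hd.2]
  · intro n
    obtain ⟨a1, a2⟩ := hl' n
    have hd := mul_slope l s hdef n (3 * s) (by linarith)
    rw [abs_le] at hd
    rw [abs_le]
    constructor <;> nlinarith [hd.1, hd.2]
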